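/- Consider the ODE system u' = γ·f(u,v), v' = γ·(−f(u,v) + q_0(u+v,v)) with f(u,v) = (a_1 + (a_3 − a_1)·u/(a_2+u))·v − a_4·u/(a_5+u) and q_0(w,v) = a_6·(V_0 − c·|Γ|·w)·max(1 − w, 0) − a_{−6}·v, all parameters positive, a_3 > a_1. Then the set A = {(u,v) : u ≥ 0, v ≥ 0, u + v ≤ min(1, m)}, m = V_0/(c·|Γ|), satisfies: f(0,v) ≥ 0 and −f(u,0) + q_0(u,0) ≥ 0 for all 0 ≤ u,v ≤ min(1,m), and f(u,v) + (−f(u,v) + q_0(u+v,v)) ≤ 0 whenever u,v ≥ 0 and u + v = min(1,m). Consequently A is forward invariant for the ODE system. -/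

import Mathlib

open Set Filter Topology

lemma max3_zero {x y z : ℝ} (h : max x 0 + max y 0 + max z 0 = 0) :
    x ≤ 0 ∧ y ≤ 0 ∧ z ≤ 0 := by
  have hx := le_max_left x 0; have hx0 := le_max_right x 0
  have hy := le_max_left y 0; have hy0 := le_max_right y 0
  have hz := le_max_left z 0; have hz0 := le_max_right z 0
  exact ⟨by linarith, by linarith, by linarith⟩

/-- One-sided slope bound for `max (g ·) 0` from a derivative. -/
lemma slope_posPart_ev {g : ℝ → ℝ} {d x : ℝ} (hg : HasDerivAt g d x)
    {ε : ℝ} (hε : 0 < ε) :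
    ∀ᶠ z in 𝓝[>] x, max (g z) 0 - max (g x) 0 ≤
      ((if g x < 0 then 0 else max d 0) + ε) * (z - x) := by
  set B : ℝ := if g x < 0 then 0 else max d 0 with hBdef
  have hB0 : 0 ≤ B := by
    rw [hBdef]; split
    · exact le_refl 0
    · exact le_max_right _ _
  have h2 : ∀ᶠ z in 𝓝[>] x, x < z := eventually_mem_nhdsWithin
  by_cases hgx : g x < 0
  · have h3 : ∀ᶠ z in 𝓝 x, g z < 0 := hg.continuousAt.eventually_lt_const hgx
    filter_upwards [h3.filter_mono nhdsWithin_le_nhds, h2] with z hz3 hz2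
    rw [max_eq_right hz3.le, max_eq_right hgx.le]
    have : 0 ≤ (B + ε) * (z - x) := mul_nonneg (by linarith) (by linarith)
    linarith
  · have hBd : d ≤ B := by rw [hBdef, if_neg hgx]; exact le_max_left _ _
    have hgx0 : 0 ≤ g x := not_lt.mp hgx
    have h1 : ∀ᶠ z in 𝓝[>] x, slope g x z < d + ε := by
      have := (hasDerivAt_iff_tendsto_slope.mp hg).eventually_lt_const
        (show d < d + ε by linarith)
      exact this.filter_mono (nhdsWithin_mono x (show Ioi x ⊆ {x}ᶜ from fun z hz => by simpa using (mem_Ioi.mp hz).ne'))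
    filter_upwards [h1, h2] with z hz1 hz2
    rw [slope_def_field, div_lt_iff₀ (by linarith)] at hz1
    have hmax : max (g z) 0 ≤ g x + (B + ε) * (z - x) := by
      apply max_le
      · nlinarith
      · nlinarith
    rw [max_eq_left hgx0]
    linarith

set_option maxHeartbeats 2000000 in
lemma core_bound (a1 a2 a3 a4 a5 a6 am6 γ V0 c Γ m M ε0 : ℝ)
    (h1 : 0 < a1) (h2 : 0 < a2) (h3 : 0 < a3) (h4 : 0 < a4) (h5 : 0 < a5)
    (h6 : 0 < a6) (hm6 : 0 < am6) (hγ : 0 < γ) (hV0 : 0 < V0) (hc : 0 < c)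
    (hΓ : 0 < Γ) (h13 : a1 < a3) (hV0m : V0 = c * Γ * m) (hM : M = min 1 m)
    (hε0 : 0 < ε0) (hε2 : 2 * ε0 ≤ a2) (hε5 : 2 * ε0 ≤ a5)
    (hεc : (a3 - a1) * ε0 ≤ a1 * (a2 - ε0))
    (u v : ℝ) (hu : -ε0 ≤ u) (hv : -ε0 ≤ v) :
    (if -u < 0 then (0:ℝ) else
      max (-(γ * ((a1 + (a3 - a1) * u / (a2 + u)) * v - a4 * u / (a5 + u)))) 0)
    + (if -v < 0 then (0:ℝ) else
      max (-(γ * (-((a1 + (a3 - a1) * u / (a2 + u)) * v - a4 * u / (a5 + u))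
          + (a6 * (V0 - c * Γ * (u + v)) * max (1 - (u + v)) 0 - am6 * v)))) 0)
    + (if u + v - M < 0 then (0:ℝ) else
      max (γ * ((a1 + (a3 - a1) * u / (a2 + u)) * v - a4 * u / (a5 + u))
          + γ * (-((a1 + (a3 - a1) * u / (a2 + u)) * v - a4 * u / (a5 + u))
          + (a6 * (V0 - c * Γ * (u + v)) * max (1 - (u + v)) 0 - am6 * v))) 0)
    ≤ (γ * (2 * a4 / a5 + a3 + a6 * c * Γ + am6)) *
        (max (-u) 0 + max (-v) 0 + max (u + v - M) 0) := by
  have ha2u : 0 < a2 + u := by linarith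
  have ha5u : 0 < a5 + u := by linarith
  have hm0 : 0 < m := by
    by_contra hx
    push_neg at hx
    have : c * Γ * m ≤ 0 := mul_nonpos_of_nonneg_of_nonpos (mul_pos hc hΓ).le hx
    rw [← hV0m] at this; linarith
  set cu : ℝ := a1 + (a3 - a1) * u / (a2 + u) with hcu_def
  set P : ℝ := max (-u) 0 with hP_def
  set Q : ℝ := max (-v) 0 with hQ_def
  set R : ℝ := max (u + v - M) 0 with hR_def
  set mx : ℝ := max (1 - (u + v)) 0 with hmx_def
  have hP0 : 0 ≤ P := le_max_right _ _
  have hQ0 : 0 ≤ Q := le_max_right _ _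
  have hR0 : 0 ≤ R := le_max_right _ _
  have hmx0 : 0 ≤ mx := le_max_right _ _
  have hPu : -u ≤ P := le_max_left _ _
  have hQv : -v ≤ Q := le_max_left _ _
  have hRw : u + v - M ≤ R := le_max_left _ _
  -- cu bounds
  have hcu0 : 0 ≤ cu := by
    have key : 0 ≤ a1 * (a2 + u) + (a3 - a1) * u := by
      linarith [mul_nonneg h1.le (show 0 ≤ u + ε0 by linarith),
        mul_nonneg (show 0 ≤ a3 - a1 by linarith) (show 0 ≤ u + ε0 by linarith)]
    have : cu = (a1 * (a2 + u) + (a3 - a1) * u) / (a2 + u) := by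
      rw [hcu_def]; field_simp
    rw [this]; exact div_nonneg key ha2u.le
  have hcu3 : cu ≤ a3 := by
    have : (a3 - a1) * u / (a2 + u) ≤ a3 - a1 := by
      rw [div_le_iff₀ ha2u]
      linarith [mul_nonneg (show 0 ≤ a3 - a1 by linarith) h2.le]
    simp only [hcu_def]; linarith
  -- F3
  have hF3 : -(a4 * u / (a5 + u)) ≤ 2 * a4 / a5 * P := by
    rcases le_or_gt 0 u with h | h
    · have h1' : 0 ≤ a4 * u / (a5 + u) := div_nonneg (by positivity) ha5u.le
      have h2' : 0 ≤ 2 * a4 / a5 * P := by positivity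
      linarith
    · rw [hP_def, max_eq_left (by linarith)]
      have e : -(a4 * u / (a5 + u)) = -(a4 * u) / (a5 + u) := by ring
      rw [e, div_le_iff₀ ha5u, div_mul_eq_mul_div, div_mul_eq_mul_div, le_div_iff₀ h5]
      nlinarith [mul_nonneg (mul_nonneg h4.le (show (0:ℝ) ≤ -u by linarith))
        (show (0:ℝ) ≤ a5 + 2*u by linarith)]
  -- F5
  have hF5 : a6 * c * Γ * ((u + v) - m) * mx ≤ a6 * c * Γ * R := by
    rcases le_or_gt (u + v) m with h | h
    · have hcoef : 0 ≤ a6 * c * Γ := by positivity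
      have l1 := mul_nonpos_of_nonneg_of_nonpos (mul_nonneg hcoef hmx0)
        (show (u + v) - m ≤ 0 by linarith)
      linarith [mul_nonneg hcoef hR0]
    · have hMm : M ≤ m := by rw [hM]; exact min_le_right _ _
      have hmx1 : mx ≤ 1 := by
        rw [hmx_def]; apply max_le (by linarith) (by norm_num)
      have hwR : (u + v) - m ≤ R := by linarith
      have hcoef : 0 ≤ a6 * c * Γ := by positivity
      have p1 : 0 ≤ a6 * c * Γ * ((u + v) - m) * (1 - mx) :=
        mul_nonneg (mul_nonneg hcoef (by linarith)) (by linarith)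
      have p2 : 0 ≤ a6 * c * Γ * (R - ((u + v) - m)) :=
        mul_nonneg hcoef (by linarith)
      nlinarith [p1, p2]
  -- F6
  have hF6 : M ≤ u + v → a6 * (V0 - c * Γ * (u + v)) * mx ≤ 0 := by
    intro hMw
    rcases le_or_gt m (u + v) with h | h
    · have hneg : V0 - c * Γ * (u + v) ≤ 0 := by
        have := mul_le_mul_of_nonneg_left h (mul_pos hc hΓ).le
        rw [hV0m]; nlinarith
      have := mul_nonpos_of_nonneg_of_nonpos (mul_nonneg h6.le hmx0) hneg
      nlinarith [this]
    · have h1w : 1 ≤ u + v := by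
        rcases le_total m 1 with hm1 | hm1
        · rw [hM, min_eq_right hm1] at hMw; linarith
        · rw [hM, min_eq_left hm1] at hMw; linarith
      have : mx = 0 := by rw [hmx_def]; exact max_eq_right (by linarith)
      rw [this]; ring_nf; exact le_refl 0
  clear_value cu P Q R mx
  -- three if-bounds
  have hB1 : (if -u < 0 then (0:ℝ) else
      max (-(γ * (cu * v - a4 * u / (a5 + u)))) 0) ≤ γ * (a3 * Q) := by
    split_ifs with h
    · positivity
    · have hu0 : u ≤ 0 := by linarith [not_lt.mp h]
      apply max_le _ (by positivity)
      have t1 : a4 * u / (a5 + u) ≤ 0 :=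
        div_nonpos_of_nonpos_of_nonneg (by nlinarith) ha5u.le
      have t2 : -(cu * v) ≤ a3 * Q := by
        linarith [mul_nonneg (show 0 ≤ a3 - cu by linarith) hQ0,
          mul_nonneg hcu0 (show 0 ≤ Q + v by linarith)]
      have : -(γ * (cu * v - a4 * u / (a5 + u))) = γ * (a4 * u / (a5 + u) + -(cu * v)) := by ring
      rw [this]
      exact mul_le_mul_of_nonneg_left (by linarith) hγ.le
  have hB2 : (if -v < 0 then (0:ℝ) else
      max (-(γ * (-(cu * v - a4 * u / (a5 + u))
          + (a6 * (V0 - c * Γ * (u + v)) * mx - am6 * v)))) 0)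
      ≤ γ * (2 * a4 / a5 * P + a6 * c * Γ * R) := by
    split_ifs with h
    · positivity
    · have hv0 : v ≤ 0 := by linarith [not_lt.mp h]
      apply max_le _ (by positivity)
      have t1 : cu * v ≤ 0 := mul_nonpos_of_nonneg_of_nonpos hcu0 hv0
      have t2 : am6 * v ≤ 0 := mul_nonpos_of_nonneg_of_nonpos hm6.le hv0
      have t3 : -(a6 * (V0 - c * Γ * (u + v)) * mx) = a6 * c * Γ * ((u + v) - m) * mx := by
        rw [hV0m]; ring
      have inner : cu * v - a4 * u / (a5 + u)
          - (a6 * (V0 - c * Γ * (u + v)) * mx - am6 * v)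
          ≤ 2 * a4 / a5 * P + a6 * c * Γ * R := by linarith [hF3, hF5, t1, t2, t3]
      have e : -(γ * (-(cu * v - a4 * u / (a5 + u))
          + (a6 * (V0 - c * Γ * (u + v)) * mx - am6 * v)))
          = γ * (cu * v - a4 * u / (a5 + u)
          - (a6 * (V0 - c * Γ * (u + v)) * mx - am6 * v)) := by ring
      rw [e]
      exact mul_le_mul_of_nonneg_left inner hγ.le
  have hB3 : (if u + v - M < 0 then (0:ℝ) else
      max (γ * (cu * v - a4 * u / (a5 + u))
          + γ * (-(cu * v - a4 * u / (a5 + u))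
          + (a6 * (V0 - c * Γ * (u + v)) * mx - am6 * v))) 0) ≤ γ * (am6 * Q) := by
    split_ifs with h
    · positivity
    · have hMw : M ≤ u + v := by linarith [not_lt.mp h]
      apply max_le _ (by positivity)
      have t1 := hF6 hMw
      have t2 : -(am6 * v) ≤ am6 * Q := by
        linarith [mul_nonneg hm6.le (show 0 ≤ Q + v by linarith)]
      have e : γ * (cu * v - a4 * u / (a5 + u))
          + γ * (-(cu * v - a4 * u / (a5 + u))
          + (a6 * (V0 - c * Γ * (u + v)) * mx - am6 * v))
          = γ * (a6 * (V0 - c * Γ * (u + v)) * mx + -(am6 * v) - 0) := by ring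
      rw [e]
      exact mul_le_mul_of_nonneg_left (by linarith) hγ.le
  have final : γ * (a3 * Q) + γ * (2 * a4 / a5 * P + a6 * c * Γ * R) + γ * (am6 * Q)
      ≤ (γ * (2 * a4 / a5 + a3 + a6 * c * Γ + am6)) * (P + Q + R) := by
    have d1 : 0 ≤ γ * ((a3 + a6 * c * Γ + am6) * P) :=
      mul_nonneg hγ.le (mul_nonneg (by positivity) hP0)
    have d2 : 0 ≤ γ * ((2 * a4 / a5 + a6 * c * Γ) * Q) :=
      mul_nonneg hγ.le (mul_nonneg (by positivity) hQ0)
    have d3 : 0 ≤ γ * ((2 * a4 / a5 + a3 + am6) * R) :=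
      mul_nonneg hγ.le (mul_nonneg (by positivity) hR0)
    linarith [d1, d2, d3]
  linarith [hB1, hB2, hB3, final]

open Set Filter Topology in
set_option maxHeartbeats 2000000 in
theorem stmt_5 (a1 a2 a3 a4 a5 a6 am6 γ V0 c Γ m : ℝ)
    (h1 : 0 < a1) (h2 : 0 < a2) (h3 : 0 < a3) (h4 : 0 < a4) (h5 : 0 < a5)
    (h6 : 0 < a6) (hm6 : 0 < am6) (hγ : 0 < γ) (hV0 : 0 < V0) (hc : 0 < c)
    (hΓ : 0 < Γ) (h13 : a1 < a3) (hm : m = V0 / (c * Γ)) :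
    (∀ u v : ℝ, 0 ≤ u → 0 ≤ v → u ≤ min 1 m → v ≤ min 1 m →
      0 ≤ (a1 + (a3 - a1) * 0 / (a2 + 0)) * v - a4 * 0 / (a5 + 0) ∧
      0 ≤ -((a1 + (a3 - a1) * u / (a2 + u)) * 0 - a4 * u / (a5 + u))
          + (a6 * (V0 - c * Γ * u) * max (1 - u) 0 - am6 * 0)) ∧
    (∀ u v : ℝ, 0 ≤ u → 0 ≤ v → u + v = min 1 m →
      ((a1 + (a3 - a1) * u / (a2 + u)) * v - a4 * u / (a5 + u))
        + (-((a1 + (a3 - a1) * u / (a2 + u)) * v - a4 * u / (a5 + u))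
            + (a6 * (V0 - c * Γ * (u + v)) * max (1 - (u + v)) 0 - am6 * v)) ≤ 0) ∧
    (∀ u v : ℝ → ℝ,
      (∀ t : ℝ, HasDerivAt u
        (γ * ((a1 + (a3 - a1) * u t / (a2 + u t)) * v t - a4 * u t / (a5 + u t))) t) →
      (∀ t : ℝ, HasDerivAt v
        (γ * (-((a1 + (a3 - a1) * u t / (a2 + u t)) * v t - a4 * u t / (a5 + u t))
            + (a6 * (V0 - c * Γ * (u t + v t)) * max (1 - (u t + v t)) 0 - am6 * v t))) t) →
      (0 ≤ u 0 ∧ 0 ≤ v 0 ∧ u 0 + v 0 ≤ min 1 m) →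
      ∀ t : ℝ, 0 ≤ t → 0 ≤ u t ∧ 0 ≤ v t ∧ u t + v t ≤ min 1 m) := by
  have hcΓ : 0 < c * Γ := mul_pos hc hΓ
  have hV0m : V0 = c * Γ * m := by rw [hm]; field_simp
  refine ⟨?_, ?_, ?_⟩
  · intro u v hu hv hu1 hv1
    constructor
    · have he : (a1 + (a3 - a1) * 0 / (a2 + 0)) * v - a4 * 0 / (a5 + 0) = a1 * v := by
        norm_num
      rw [he]
      exact mul_nonneg h1.le hv
    · have h5u : 0 < a5 + u := by linarith
      have t1 : 0 ≤ a4 * u / (a5 + u) := div_nonneg (mul_nonneg h4.le hu) h5u.le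
      have t2 : 0 ≤ a6 * (V0 - c * Γ * u) * max (1 - u) 0 := by
        apply mul_nonneg (mul_nonneg h6.le _) (le_max_right _ _)
        have hum : u ≤ m := le_trans hu1 (min_le_right 1 m)
        rw [hV0m]
        nlinarith
      nlinarith [t1, t2]
  · intro u v hu hv hsum
    have he : ((a1 + (a3 - a1) * u / (a2 + u)) * v - a4 * u / (a5 + u))
        + (-((a1 + (a3 - a1) * u / (a2 + u)) * v - a4 * u / (a5 + u))
            + (a6 * (V0 - c * Γ * (u + v)) * max (1 - (u + v)) 0 - am6 * v))
        = a6 * (V0 - c * Γ * (u + v)) * max (1 - (u + v)) 0 - am6 * v := by ring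
    rw [he, hsum]
    have hv' : 0 ≤ am6 * v := mul_nonneg hm6.le hv
    rcases le_total m 1 with h | h
    · rw [min_eq_right h, hV0m]
      have : c * Γ * m - c * Γ * m = 0 := by ring
      nlinarith
    · rw [min_eq_left h]
      rw [show max (1 - (1:ℝ)) 0 = 0 from by norm_num]
      nlinarith
  · intro u v hu hv hinit
    have hcΓ : 0 < c * Γ := mul_pos hc hΓ
    have hV0m : V0 = c * Γ * m := by rw [hm]; field_simp
    set M : ℝ := min 1 m with hM
    set ε0 : ℝ := min (min (a2 / 2) (a5 / 2)) (a1 * a2 / (2 * (a3 - a1))) with hε0_def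
    have h31 : 0 < a3 - a1 := by linarith
    have hε0 : 0 < ε0 := by
      apply lt_min (lt_min (by linarith) (by linarith))
      positivity
    have hεa := min_le_left (min (a2 / 2) (a5 / 2)) (a1 * a2 / (2 * (a3 - a1)))
    have hεb := min_le_right (min (a2 / 2) (a5 / 2)) (a1 * a2 / (2 * (a3 - a1)))
    rw [← hε0_def] at hεa hεb
    have hε2 : 2 * ε0 ≤ a2 := by
      have := min_le_left (a2 / 2) (a5 / 2); linarith
    have hε5 : 2 * ε0 ≤ a5 := by
      have := min_le_right (a2 / 2) (a5 / 2); linarith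
    have hεc : (a3 - a1) * ε0 ≤ a1 * (a2 - ε0) := by
      have hmul : (a3 - a1) * ε0 ≤ (a3 - a1) * (a1 * a2 / (2 * (a3 - a1))) :=
        mul_le_mul_of_nonneg_left hεb h31.le
      have he : (a3 - a1) * (a1 * a2 / (2 * (a3 - a1))) = a1 * a2 / 2 := by
        field_simp
      nlinarith [mul_pos h1 hε0]
    set F : ℝ → ℝ :=
      fun t => max (-(u t)) 0 + max (-(v t)) 0 + max (u t + v t - M) 0 with hF
    have hCu : Continuous u := by
      have hd : Differentiable ℝ u := fun t => (hu t).differentiableAt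
      exact hd.continuous
    have hCv : Continuous v := by
      have hd : Differentiable ℝ v := fun t => (hv t).differentiableAt
      exact hd.continuous
    have hCF : Continuous F := by
      apply Continuous.add
      apply Continuous.add
      · exact hCu.neg.max continuous_const
      · exact hCv.neg.max continuous_const
      · exact ((hCu.add hCv).sub continuous_const).max continuous_const
    have hF0 : ∀ t, 0 ≤ F t := by
      intro t
      have := le_max_right (-(u t)) (0:ℝ)
      have := le_max_right (-(v t)) (0:ℝ)
      have := le_max_right (u t + v t - M) (0:ℝ)
      show 0 ≤ max (-(u t)) 0 + max (-(v t)) 0 + max (u t + v t - M) 0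
      linarith
    have hF00 : F 0 = 0 := by
      show max (-(u 0)) 0 + max (-(v 0)) 0 + max (u 0 + v 0 - M) 0 = 0
      rw [max_eq_right (by linarith [hinit.1]), max_eq_right (by linarith [hinit.2.1]),
        max_eq_right (by linarith [hinit.2.2])]
      ring
    -- main claim
    have claim : ∀ t, 0 ≤ t → F t = 0 := by
      by_contra hcon
      push_neg at hcon
      obtain ⟨t0, ht0, hFt0⟩ := hcon
      set E : Set ℝ := {t | 0 ≤ t ∧ F t ≠ 0} with hE
      have hEne : E.Nonempty := ⟨t0, ht0, hFt0⟩
      have hEbdd : BddBelow E := ⟨0, fun e he => he.1⟩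
      set t1 : ℝ := sInf E with ht1
      have ht10 : 0 ≤ t1 := le_csInf hEne (fun e he => he.1)
      have hlow : ∀ s, 0 ≤ s → s < t1 → F s = 0 := by
        intro s hs0 hst1
        by_contra hFs
        exact absurd (csInf_le hEbdd ⟨hs0, hFs⟩) (not_le.mpr hst1)
      have hFt1 : F t1 = 0 := by
        rcases eq_or_lt_of_le ht10 with h | h
        · rw [← h]; exact hF00
        · have hev : ∀ᶠ s in 𝓝[<] t1, F s = 0 := by
            filter_upwards [Ioo_mem_nhdsLT h]
              with s hs
            exact hlow s hs.1.le hs.2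
          have hT1 : Tendsto F (𝓝[<] t1) (𝓝 (F t1)) :=
            (hCF.continuousAt).continuousWithinAt.tendsto
          have hT2 : Tendsto F (𝓝[<] t1) (𝓝 0) :=
            Tendsto.congr' (hev.mono fun s h => h.symm) tendsto_const_nhds
          exact tendsto_nhds_unique hT1 hT2
      obtain ⟨hu1, hv1, hw1⟩ := max3_zero hFt1
      -- continuity at t1
      obtain ⟨δ1, hδ1, hball1⟩ := Metric.continuousAt_iff.mp hCu.continuousAt ε0 hε0
      obtain ⟨δ2, hδ2, hball2⟩ := Metric.continuousAt_iff.mp hCv.continuousAt ε0 hε0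
      set δ : ℝ := min δ1 δ2 with hδdef
      have hδ : 0 < δ := lt_min hδ1 hδ2
      set b : ℝ := t1 + δ / 2 with hb
      have hbox : ∀ x ∈ Ico t1 b, -ε0 ≤ u x ∧ -ε0 ≤ v x := by
        intro x hx
        have hdist : dist x t1 < δ := by
          rw [Real.dist_eq, abs_of_nonneg (by linarith [hx.1])]
          have h2' := hx.2
          rw [hb] at h2'
          linarith
        have hb1 := hball1 (lt_of_lt_of_le hdist (min_le_left _ _))
        have hb2 := hball2 (lt_of_lt_of_le hdist (min_le_right _ _))
        rw [Real.dist_eq] at hb1 hb2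
        obtain ⟨hb1l, hb1r⟩ := abs_lt.mp hb1
        obtain ⟨hb2l, hb2r⟩ := abs_lt.mp hb2
        exact ⟨by linarith, by linarith⟩
      -- Gronwall
      have hgron := le_gronwallBound_of_liminf_deriv_right_le
        (f := F) (f' := fun x => (γ * (2 * a4 / a5 + a3 + a6 * c * Γ + am6)) * F x)
        (δ := 0) (K := γ * (2 * a4 / a5 + a3 + a6 * c * Γ + am6)) (ε := 0) (a := t1) (b := b)
        hCF.continuousOn ?slope (le_of_eq hFt1) (fun x hx => by simp)
      case slope =>
        intro x hx r hr
        replace hr : (γ * (2 * a4 / a5 + a3 + a6 * c * Γ + am6)) * F x < r := hr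
        set ε' : ℝ := (r - (γ * (2 * a4 / a5 + a3 + a6 * c * Γ + am6)) * F x) / 4 with hε'def
        have hε' : 0 < ε' := by rw [hε'def]; linarith
        have E1 := slope_posPart_ev ((hu x).neg) hε'
        have E2 := slope_posPart_ev ((hv x).neg) hε'
        have E3 := slope_posPart_ev (((hu x).add (hv x)).sub_const M) hε'
        have hx_box := hbox x hx
        have hcore := core_bound a1 a2 a3 a4 a5 a6 am6 γ V0 c Γ m M ε0
          h1 h2 h3 h4 h5 h6 hm6 hγ hV0 hc hΓ h13 hV0m hM hε0 hε2 hε5 hεc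
          (u x) (v x) hx_box.1 hx_box.2
        apply Filter.Eventually.frequently
        filter_upwards [E1, E2, E3, eventually_mem_nhdsWithin] with z e1 e2 e3 hz
        beta_reduce at e1 e2 e3
        simp only [Pi.neg_apply, Pi.add_apply] at e1 e2 e3
        have hzx : 0 < z - x := by
          have : x < z := hz
          linarith
        rw [inv_mul_lt_iff₀ hzx]
        have hFz : F z = max (-(u z)) 0 + max (-(v z)) 0 + max (u z + v z - M) 0 := rfl
        have hFx : F x = max (-(u x)) 0 + max (-(v x)) 0 + max (u x + v x - M) 0 := rfl
        have hmul := mul_le_mul_of_nonneg_right hcore (le_of_lt hzx)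
        have h3e : (γ * (2 * a4 / a5 + a3 + a6 * c * Γ + am6)) * F x + 3 * ε' < r := by
          rw [hε'def]; linarith
        have hrr := mul_lt_mul_of_pos_right h3e hzx
        rw [hFx] at hrr
        rw [hFz, hFx]
        linarith [e1, e2, e3, hmul, hrr]
      have hzero : ∀ x ∈ Icc t1 b, F x = 0 := by
        intro x hx
        have hgx := hgron x hx
        rw [gronwallBound_ε0_δ0] at hgx
        exact le_antisymm hgx (hF0 x)
      obtain ⟨e, heE, heb⟩ := (csInf_lt_iff hEbdd hEne).mp
        (show sInf E < b by rw [← ht1, hb]; linarith)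
      have het1 : t1 ≤ e := csInf_le hEbdd heE
      exact heE.2 (hzero e ⟨het1, heb.le⟩)
    intro t ht
    have hfin := max3_zero (claim t ht)
    exact ⟨by linarith [hfin.1], by linarith [hfin.2.1], by linarith [hfin.2.2]⟩
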